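/- Let H(x) = 2/(π(1+x²)²) and define I₀(f,g) = ∫∫_{ℝ²} f(x)g(y)|x−y|²log|x−y| dx dy. Then I₀(H,H) = 2·log 2 + 1. -/

import Mathlib

open Real MeasureTheory Set intervalIntegral

noncomputable def Hfun (x : ℝ) : ℝ := 2 / (Real.pi * (1 + x^2)^2)


lemma II_neg_log01 : IntervalIntegrable (fun t : ℝ => -Real.log t) volume 0 1 := by
  apply intervalIntegrable_deriv_of_nonneg (g := fun t : ℝ => t - t * Real.log t)
  · exact (continuous_id.sub Real.continuous_mul_log).continuousOn
  · intro x hx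
    simp only [min_eq_left, max_eq_right, zero_le_one, mem_Ioo] at hx
    have h := Real.hasDerivAt_mul_log (ne_of_gt hx.1)
    have := (hasDerivAt_id x).sub h
    exact this.congr_deriv (by ring)
  · intro x hx
    simp only [min_eq_left, max_eq_right, zero_le_one, mem_Ioo] at hx
    have : Real.log x ≤ 0 := Real.log_nonpos hx.1.le hx.2.le
    linarith

lemma II_log01 : IntervalIntegrable (fun t : ℝ => Real.log t) volume 0 1 := by
  have h := II_neg_log01.neg
  have e : (fun t : ℝ => Real.log t) = -(fun t : ℝ => -Real.log t) := by
    funext t; simp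
  rw [e]; exact h

lemma II_log_to (c : ℝ) (hc : 1 ≤ c) : IntervalIntegrable (fun t : ℝ => Real.log t) volume 0 c := by
  apply II_log01.trans
  apply ContinuousOn.intervalIntegrable
  apply Real.continuousOn_log.mono
  intro y hy
  rw [uIcc_of_le hc] at hy
  simp only [mem_compl_iff, mem_singleton_iff]
  intro h0
  rw [h0] at hy
  exact absurd hy.1 (by norm_num)

lemma II_logsin : IntervalIntegrable (fun t : ℝ => Real.log (Real.sin t)) volume 0 (π/2) := by
  have hπ : (1:ℝ) ≤ π/2 := by nlinarith [Real.pi_gt_three]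
  have hg : IntervalIntegrable (fun t : ℝ => Real.log (π/2) - Real.log t) volume 0 (π/2) :=
    (_root_.intervalIntegrable_const).sub (II_log_to _ hπ)
  apply hg.mono_fun
  · exact ((Real.measurable_log.comp Real.measurable_sin).aestronglyMeasurable)
  · rw [Filter.EventuallyLE, ae_restrict_iff' measurableSet_uIoc]
    filter_upwards with t ht
    rw [uIoc_of_le (by linarith : (0:ℝ) ≤ π/2), mem_Ioc] at ht
    have ht0 : 0 < t := ht.1
    have htp : t ≤ π/2 := ht.2
    have hsin_pos : 0 < Real.sin t := Real.sin_pos_of_pos_of_lt_pi ht0 (by nlinarith [Real.pi_pos])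
    have hsin_le : Real.sin t ≤ 1 := Real.sin_le_one t
    have hjordan : 2/π * t ≤ Real.sin t := Real.mul_le_sin ht0.le htp
    have h2pi : 0 < 2/π * t := by positivity
    simp only [Real.norm_eq_abs]
    rw [abs_of_nonpos (Real.log_nonpos hsin_pos.le hsin_le)]
    have h1 : Real.log (2/π * t) ≤ Real.log (Real.sin t) := Real.log_le_log h2pi hjordan
    have h2 : Real.log (2/π * t) = Real.log t - Real.log (π/2) := by
      rw [Real.log_mul (by positivity) (ne_of_gt ht0)]
      rw [show (2:ℝ)/π = (π/2)⁻¹ by field_simp]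
      rw [Real.log_inv]; ring
    have h3 : -Real.log (Real.sin t) ≤ Real.log (π/2) - Real.log t := by
      rw [h2] at h1; linarith
    calc -Real.log (Real.sin t) ≤ Real.log (π/2) - Real.log t := h3
      _ ≤ |Real.log (π/2) - Real.log t| := le_abs_self _



lemma II_logsin' : IntervalIntegrable (fun t : ℝ => Real.log (Real.sin t)) volume (π/2) π := by
  have h := II_logsin.comp_sub_left π
  simp only [sub_zero, Real.sin_pi_sub] at h
  rw [show π - π/2 = π/2 by ring] at h
  exact h.symm

lemma II_logsin_full : IntervalIntegrable (fun t : ℝ => Real.log (Real.sin t)) volume 0 π :=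
  II_logsin.trans II_logsin'

lemma II_logcos : IntervalIntegrable (fun t : ℝ => Real.log (Real.cos t)) volume (-(π/2)) (π/2) := by
  have h := II_logsin_full.comp_add_right (π/2)
  have h2 : (fun x : ℝ => Real.log (Real.sin (x + π/2))) = fun x : ℝ => Real.log (Real.cos x) := by
    funext x; rw [Real.sin_add_pi_div_two]
  rw [h2] at h
  have e1 : (0:ℝ) - π/2 = -(π/2) := by ring
  have e2 : π - π/2 = π/2 := by ring
  rwa [e1, e2] at h

lemma II_logcos_half : IntervalIntegrable (fun t : ℝ => Real.log (Real.cos t)) volume 0 (π/2) := by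
  apply II_logcos.mono_set
  rw [uIcc_of_le (by positivity : (0:ℝ) ≤ π/2), uIcc_of_le (by linarith [Real.pi_pos] : -(π/2) ≤ π/2)]
  apply Icc_subset_Icc (by linarith [Real.pi_pos]) le_rfl

-- domination helper: anything bounded-coefficient times log cos is integrable
lemma II_mul_logcos (c : ℝ → ℝ) (hc : Measurable c) (hbd : ∀ t, |c t| ≤ 1) :
    IntervalIntegrable (fun t : ℝ => c t * Real.log (Real.cos t)) volume (-(π/2)) (π/2) := by
  apply II_logcos.mono_fun
  · exact (hc.mul (Real.measurable_log.comp Real.measurable_cos)).aestronglyMeasurable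
  · filter_upwards with t
    simp only [Real.norm_eq_abs, abs_mul]
    calc |c t| * |Real.log (Real.cos t)| ≤ 1 * |Real.log (Real.cos t)| := by
          apply mul_le_mul_of_nonneg_right (hbd t) (abs_nonneg _)
      _ = |Real.log (Real.cos t)| := one_mul _



lemma interval_congr_Ioo {a b : ℝ} (hab : a ≤ b) {f g : ℝ → ℝ}
    (h : ∀ t ∈ Ioo a b, f t = g t) : ∫ t in a..b, f t = ∫ t in a..b, g t := by
  rw [intervalIntegral.integral_of_le hab, intervalIntegral.integral_of_le hab,
    MeasureTheory.integral_Ioc_eq_integral_Ioo, MeasureTheory.integral_Ioc_eq_integral_Ioo]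
  exact setIntegral_congr_fun measurableSet_Ioo h

lemma logcos_eq_logsin_half :
    ∫ t in (0:ℝ)..(π/2), Real.log (Real.cos t) = ∫ t in (0:ℝ)..(π/2), Real.log (Real.sin t) := by
  have h := intervalIntegral.integral_comp_sub_left (a := (0:ℝ)) (b := π/2)
    (fun t => Real.log (Real.sin t)) (π/2)
  simp only [sub_zero, sub_self] at h
  have h2 : (fun x : ℝ => Real.log (Real.sin (π/2 - x))) = fun x : ℝ => Real.log (Real.cos x) := by
    funext x; rw [Real.sin_pi_div_two_sub]
  rw [h2] at h
  simpa using h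

lemma logsin_upper :
    ∫ t in (π/2:ℝ)..π, Real.log (Real.sin t) = ∫ t in (0:ℝ)..(π/2), Real.log (Real.sin t) := by
  have h := intervalIntegral.integral_comp_sub_left (a := (0:ℝ)) (b := π/2)
    (fun t => Real.log (Real.sin t)) π
  have h2 : (fun x : ℝ => Real.log (Real.sin (π - x))) = fun x : ℝ => Real.log (Real.sin x) := by
    funext x; rw [Real.sin_pi_sub]
  rw [h2] at h
  rw [show π - π/2 = π/2 by ring, sub_zero] at h
  exact h.symm

lemma S_eq : ∫ t in (0:ℝ)..(π/2), Real.log (Real.sin t) = -(π/2) * Real.log 2 := by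
  set S := ∫ t in (0:ℝ)..(π/2), Real.log (Real.sin t) with hS
  have hfull : ∫ t in (0:ℝ)..π, Real.log (Real.sin t) = 2 * S := by
    rw [← intervalIntegral.integral_add_adjacent_intervals II_logsin II_logsin', logsin_upper]
    ring
  have hdouble : ∫ t in (0:ℝ)..(π/2), Real.log (Real.sin (2*t)) = (1/2) * (2 * S) := by
    rw [intervalIntegral.integral_comp_mul_left (c := 2) (fun t => Real.log (Real.sin t))
      two_ne_zero]
    rw [show (2:ℝ) * (π/2) = π by ring, show (2:ℝ) * 0 = 0 by ring, hfull]
    norm_num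
  have hsplit : ∫ t in (0:ℝ)..(π/2), Real.log (Real.sin (2*t))
      = ∫ t in (0:ℝ)..(π/2), (Real.log 2 + Real.log (Real.sin t) + Real.log (Real.cos t)) := by
    apply interval_congr_Ioo (by positivity)
    intro t ht
    have hs : 0 < Real.sin t := Real.sin_pos_of_pos_of_lt_pi ht.1 (by nlinarith [ht.2, Real.pi_pos])
    have hc : 0 < Real.cos t := Real.cos_pos_of_mem_Ioo ⟨by linarith [ht.1, Real.pi_pos], ht.2⟩
    rw [Real.sin_two_mul, Real.log_mul (by positivity) hc.ne', Real.log_mul two_ne_zero hs.ne']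
  have hrhs : ∫ t in (0:ℝ)..(π/2), (Real.log 2 + Real.log (Real.sin t) + Real.log (Real.cos t))
      = (π/2) * Real.log 2 + S + S := by
    rw [intervalIntegral.integral_add (intervalIntegrable_const.add II_logsin) II_logcos_half,
      intervalIntegral.integral_add intervalIntegrable_const II_logsin]
    rw [intervalIntegral.integral_const, logcos_eq_logsin_half]
    simp [smul_eq_mul]; rfl
  have key : (1/2:ℝ) * (2*S) = (π/2) * Real.log 2 + S + S := by
    rw [← hdouble, hsplit, hrhs]
  linarith

lemma c0 : ∫ t in (-(π/2):ℝ)..(π/2), Real.log (Real.cos t) = -π * Real.log 2 := by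
  have h := intervalIntegral.integral_comp_add_right (a := (-(π/2):ℝ)) (b := π/2)
    (fun t => Real.log (Real.sin t)) (π/2)
  have h2 : (fun x : ℝ => Real.log (Real.sin (x + π/2))) = fun x : ℝ => Real.log (Real.cos x) := by
    funext x; rw [Real.sin_add_pi_div_two]
  rw [h2] at h
  rw [h, show (-(π/2) + π/2 : ℝ) = 0 by ring, show (π/2 + π/2 : ℝ) = π by ring]
  rw [← intervalIntegral.integral_add_adjacent_intervals II_logsin II_logsin', logsin_upper, S_eq]
  ring



lemma c2 : ∫ t in (-(π/2):ℝ)..(π/2),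
    (Real.cos t ^ 2 - Real.sin t ^ 2) * Real.log (Real.cos t) = π/2 := by
  set F : ℝ → ℝ := fun t => Real.sin t * (Real.cos t * Real.log (Real.cos t))
    + t/2 - Real.sin t * Real.cos t / 2 with hF
  have hle : (-(π/2):ℝ) ≤ π/2 := by linarith [Real.pi_pos]
  have hcont : ContinuousOn F (Icc (-(π/2)) (π/2)) := by
    apply Continuous.continuousOn
    exact ((Real.continuous_sin.mul (Real.continuous_mul_log.comp Real.continuous_cos)).add
      (continuous_id.div_const 2)).sub
      ((Real.continuous_sin.mul Real.continuous_cos).div_const 2)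
  have hderiv : ∀ t ∈ Ioo (-(π/2):ℝ) (π/2),
      HasDerivAt F ((Real.cos t ^ 2 - Real.sin t ^ 2) * Real.log (Real.cos t)) t := by
    intro t ht
    have hc : 0 < Real.cos t := Real.cos_pos_of_mem_Ioo ht
    have hlog : HasDerivAt (fun t => Real.log (Real.cos t)) (-Real.sin t / Real.cos t) t :=
      (Real.hasDerivAt_cos t).log hc.ne'
    have h1 : HasDerivAt (fun t => Real.cos t * Real.log (Real.cos t))
        (-Real.sin t * Real.log (Real.cos t) + Real.cos t * (-Real.sin t / Real.cos t)) t :=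
      (Real.hasDerivAt_cos t).mul hlog
    have h2 : HasDerivAt (fun t => Real.sin t * (Real.cos t * Real.log (Real.cos t)))
        (Real.cos t * (Real.cos t * Real.log (Real.cos t)) + Real.sin t *
          (-Real.sin t * Real.log (Real.cos t) + Real.cos t * (-Real.sin t / Real.cos t))) t :=
      (Real.hasDerivAt_sin t).mul h1
    have h3 : HasDerivAt (fun t : ℝ => t/2) (1/2 : ℝ) t := (hasDerivAt_id t).div_const 2
    have h4 : HasDerivAt (fun t => Real.sin t * Real.cos t / 2)
        ((Real.cos t * Real.cos t + Real.sin t * (-Real.sin t))/2) t :=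
      ((Real.hasDerivAt_sin t).mul (Real.hasDerivAt_cos t)).div_const 2
    have := (h2.add h3).sub h4
    refine this.congr_deriv (Eq.symm ?_)
    have hpy := Real.sin_sq_add_cos_sq t
    field_simp
    linear_combination hpy
  have hint : IntervalIntegrable
      (fun t => (Real.cos t ^ 2 - Real.sin t ^ 2) * Real.log (Real.cos t)) volume (-(π/2)) (π/2) := by
    apply II_mul_logcos
    · exact (Real.measurable_cos.pow_const 2).sub (Real.measurable_sin.pow_const 2)
    · intro t
      have h1 := Real.sin_sq_add_cos_sq t
      have h2 : Real.cos t ^ 2 ≤ 1 := by nlinarith [sq_nonneg (Real.sin t)]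
      have h3 : Real.sin t ^ 2 ≤ 1 := by nlinarith [sq_nonneg (Real.cos t)]
      rw [abs_le]
      constructor <;> nlinarith [sq_nonneg (Real.sin t), sq_nonneg (Real.cos t)]
  have := intervalIntegral.integral_eq_sub_of_hasDeriv_right_of_le hle hcont
    (fun t ht => (hderiv t ht).hasDerivWithinAt) hint
  rw [this, hF]
  simp [Real.cos_pi_div_two, Real.sin_pi_div_two]
  ring

lemma X_eq : ∫ t in (-(π/2):ℝ)..(π/2), Real.cos t ^ 2 * Real.log (Real.cos t)
    = π/4 - π/2 * Real.log 2 := by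
  have hsq : ∀ t, Real.cos t ^ 2 ≤ 1 := fun t => by
    nlinarith [Real.sin_sq_add_cos_sq t, sq_nonneg (Real.sin t)]
  have habs : ∀ t : ℝ, |Real.cos t ^ 2| ≤ 1 := fun t => by
    rw [abs_of_nonneg (sq_nonneg _)]; exact hsq t
  have hI1 : IntervalIntegrable (fun t : ℝ => Real.cos t ^ 2 * Real.log (Real.cos t))
      volume (-(π/2)) (π/2) := II_mul_logcos _ (Real.measurable_cos.pow_const 2) habs
  have key : ∫ t in (-(π/2):ℝ)..(π/2),
      ((Real.cos t ^ 2 - Real.sin t ^ 2) * Real.log (Real.cos t)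
        + Real.log (Real.cos t)) = π/2 + -π * Real.log 2 := by
    rw [intervalIntegral.integral_add (II_mul_logcos (fun t => Real.cos t ^ 2 - Real.sin t ^ 2)
      ((Real.measurable_cos.pow_const 2).sub (Real.measurable_sin.pow_const 2)) ?_) II_logcos, c2, c0]
    · intro t
      have h2 : Real.cos t ^ 2 ≤ 1 := hsq t
      have h1 := Real.sin_sq_add_cos_sq t
      rw [abs_le]
      constructor <;> nlinarith [sq_nonneg (Real.sin t), sq_nonneg (Real.cos t)]
  have hcongr : ∫ t in (-(π/2):ℝ)..(π/2),
      ((Real.cos t ^ 2 - Real.sin t ^ 2) * Real.log (Real.cos t) + Real.log (Real.cos t))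
      = ∫ t in (-(π/2):ℝ)..(π/2), 2 * (Real.cos t ^ 2 * Real.log (Real.cos t)) := by
    apply intervalIntegral.integral_congr
    intro t _
    have h := Real.sin_sq_add_cos_sq t
    linear_combination (-Real.log (Real.cos t)) * h
  have h2 : (2:ℝ) * ∫ t in (-(π/2):ℝ)..(π/2), Real.cos t ^ 2 * Real.log (Real.cos t)
      = π/2 + -π * Real.log 2 := by
    rw [← intervalIntegral.integral_const_mul, ← hcongr, key]
  linarith



lemma interval_congr_Ioo' {a b : ℝ} (hab : a ≤ b) {f g : ℝ → ℝ}
    (h : ∀ t ∈ Ioo a b, f t = g t) : ∫ t in a..b, f t = ∫ t in a..b, g t := by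
  rw [intervalIntegral.integral_of_le hab, intervalIntegral.integral_of_le hab,
    MeasureTheory.integral_Ioc_eq_integral_Ioo, MeasureTheory.integral_Ioc_eq_integral_Ioo]
  exact setIntegral_congr_fun measurableSet_Ioo h

/-- master substitution: `y = tan θ` -/
lemma integral_tan_subst (g : ℝ → ℝ) :
    (∫ x : ℝ, g x) = ∫ θ in (-(π/2):ℝ)..(π/2), (1 / Real.cos θ ^ 2) * g (Real.tan θ) := by
  have h0 : (∫ x : ℝ, g x) = ∫ x in Real.tan '' (Ioo (-(π/2)) (π/2)), g x := by
    rw [Real.image_tan_Ioo, setIntegral_univ]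
  rw [h0, integral_image_eq_integral_abs_deriv_smul measurableSet_Ioo
    (fun θ hθ => (Real.hasDerivAt_tan (Real.cos_pos_of_mem_Ioo hθ).ne').hasDerivWithinAt)
    Real.injOn_tan g]
  rw [intervalIntegral.integral_of_le (by linarith [Real.pi_pos]),
    MeasureTheory.integral_Ioc_eq_integral_Ioo]
  apply setIntegral_congr_fun measurableSet_Ioo
  intro θ _
  simp only [smul_eq_mul]
  rw [abs_of_nonneg (by positivity : (0:ℝ) ≤ 1 / Real.cos θ ^ 2)]

lemma periodic_shift (f : ℝ → ℝ) (hf : Function.Periodic f π) (φ : ℝ) :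
    ∫ θ in (-(π/2):ℝ)..(π/2), f (θ + φ) = ∫ t in (-(π/2):ℝ)..(π/2), f t := by
  rw [intervalIntegral.integral_comp_add_right f φ]
  have h := hf.intervalIntegral_add_eq (-(π/2) + φ) (-(π/2))
  rw [show (-(π/2) + φ) + π = π/2 + φ by ring, show (-(π/2):ℝ) + π = π/2 by ring] at h
  exact h

lemma cos_sq_periodic : Function.Periodic (fun t : ℝ => Real.cos t ^ 2) π := by
  intro t; simp [Real.cos_add_pi]

lemma cos_sq_log_abs_periodic :
    Function.Periodic (fun t : ℝ => Real.cos t ^ 2 * Real.log |Real.cos t|) π := by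
  intro t; simp [Real.cos_add_pi]

lemma cont_cos_sq_log_abs : Continuous (fun t : ℝ => Real.cos t ^ 2 * Real.log |Real.cos t|) := by
  have h : (fun t : ℝ => Real.cos t ^ 2 * Real.log |Real.cos t|)
      = fun t : ℝ => |Real.cos t| * (|Real.cos t| * Real.log |Real.cos t|) := by
    funext t; rw [← sq_abs]; ring
  rw [h]
  exact (continuous_abs.comp Real.continuous_cos).mul
    (Real.continuous_mul_log.comp (continuous_abs.comp Real.continuous_cos))

lemma E2 (φ : ℝ) : ∫ θ in (-(π/2):ℝ)..(π/2), Real.cos (θ + φ) ^ 2 = π/2 := by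
  rw [periodic_shift _ cos_sq_periodic φ]
  rw [integral_cos_sq]
  simp [Real.cos_pi_div_two]

lemma E3 (φ : ℝ) : ∫ θ in (-(π/2):ℝ)..(π/2), Real.cos (θ + φ) ^ 2 * Real.log |Real.cos (θ + φ)|
    = π/4 - π/2 * Real.log 2 := by
  rw [periodic_shift _ cos_sq_log_abs_periodic φ]
  rw [← X_eq]
  apply interval_congr_Ioo' (by linarith [Real.pi_pos])
  intro t ht
  rw [abs_of_pos (Real.cos_pos_of_mem_Ioo ht)]

lemma odd_integral_zero : ∫ t in (-(π/2):ℝ)..(π/2),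
    Real.sin t * Real.cos t * Real.log (Real.cos t) = 0 := by
  set f : ℝ → ℝ := fun t => Real.sin t * Real.cos t * Real.log (Real.cos t) with hf
  have h := intervalIntegral.integral_comp_neg (a := (-(π/2):ℝ)) (b := π/2) f
  have hodd : (fun t : ℝ => f (-t)) = fun t => -f t := by
    funext t; simp only [hf]; rw [Real.sin_neg, Real.cos_neg]; ring
  rw [hodd, intervalIntegral.integral_neg] at h
  simp only [neg_neg] at h
  linarith



lemma abs_sin_cos_le (t : ℝ) : |Real.sin t * Real.cos t| ≤ 1 := by
  rw [abs_mul]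
  calc |Real.sin t| * |Real.cos t| ≤ 1 * 1 :=
        mul_le_mul (Real.abs_sin_le_one t) (Real.abs_cos_le_one t) (abs_nonneg _) zero_le_one
    _ = 1 := one_mul 1

lemma abs_cos_sq_le (t : ℝ) : |Real.cos t ^ 2| ≤ 1 := by
  rw [abs_of_nonneg (sq_nonneg _), sq]
  calc Real.cos t * Real.cos t ≤ |Real.cos t| * |Real.cos t| := by
        nlinarith [abs_nonneg (Real.cos t), le_abs_self (Real.cos t), neg_abs_le (Real.cos t)]
    _ ≤ 1 * 1 := mul_le_mul (Real.abs_cos_le_one t) (Real.abs_cos_le_one t) (abs_nonneg _) zero_le_one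
    _ = 1 := one_mul 1

lemma abs_sin_sq_le (t : ℝ) : |Real.sin t ^ 2| ≤ 1 := by
  rw [abs_of_nonneg (sq_nonneg _)]
  nlinarith [Real.sin_sq_add_cos_sq t, sq_nonneg (Real.cos t)]

lemma II_cos_sq_logcos : IntervalIntegrable (fun t : ℝ => Real.cos t ^ 2 * Real.log (Real.cos t))
    volume (-(π/2)) (π/2) := II_mul_logcos _ (Real.measurable_cos.pow_const 2) abs_cos_sq_le

lemma II_sin_sq_logcos : IntervalIntegrable (fun t : ℝ => Real.sin t ^ 2 * Real.log (Real.cos t))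
    volume (-(π/2)) (π/2) := II_mul_logcos _ (Real.measurable_sin.pow_const 2) abs_sin_sq_le

lemma II_sincos_logcos : IntervalIntegrable
    (fun t : ℝ => Real.sin t * Real.cos t * Real.log (Real.cos t)) volume (-(π/2)) (π/2) :=
  II_mul_logcos _ (Real.measurable_sin.mul Real.measurable_cos) abs_sin_cos_le

lemma sin_sq_logcos_eq : ∫ t in (-(π/2):ℝ)..(π/2), Real.sin t ^ 2 * Real.log (Real.cos t)
    = -π * Real.log 2 - (π/4 - π/2 * Real.log 2) := by
  have h : ∫ t in (-(π/2):ℝ)..(π/2), Real.sin t ^ 2 * Real.log (Real.cos t)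
      = ∫ t in (-(π/2):ℝ)..(π/2),
        (Real.log (Real.cos t) - Real.cos t ^ 2 * Real.log (Real.cos t)) := by
    apply intervalIntegral.integral_congr
    intro t _
    have hp := Real.sin_sq_add_cos_sq t
    linear_combination Real.log (Real.cos t) * hp
  rw [h, intervalIntegral.integral_sub II_logcos II_cos_sq_logcos, c0, X_eq]

lemma E4 (φ : ℝ) : ∫ θ in (-(π/2):ℝ)..(π/2), Real.cos (θ + φ) ^ 2 * Real.log (Real.cos θ)
    = Real.cos φ ^ 2 * (π/4 - π/2 * Real.log 2)
      + Real.sin φ ^ 2 * (-π * Real.log 2 - (π/4 - π/2 * Real.log 2)) := by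
  have h : ∫ θ in (-(π/2):ℝ)..(π/2), Real.cos (θ + φ) ^ 2 * Real.log (Real.cos θ)
      = ∫ θ in (-(π/2):ℝ)..(π/2),
        (Real.cos φ ^ 2 * (Real.cos θ ^ 2 * Real.log (Real.cos θ))
          + Real.sin φ ^ 2 * (Real.sin θ ^ 2 * Real.log (Real.cos θ))
          + (-2 * Real.sin φ * Real.cos φ) * (Real.sin θ * Real.cos θ * Real.log (Real.cos θ))) := by
    apply intervalIntegral.integral_congr
    intro t _
    simp only [Real.cos_add]
    ring
  rw [h]
  rw [intervalIntegral.integral_add (((II_cos_sq_logcos).const_mul _).add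
      ((II_sin_sq_logcos).const_mul _)) ((II_sincos_logcos).const_mul _),
    intervalIntegral.integral_add ((II_cos_sq_logcos).const_mul _)
      ((II_sin_sq_logcos).const_mul _)]
  rw [intervalIntegral.integral_const_mul, intervalIntegral.integral_const_mul,
    intervalIntegral.integral_const_mul, X_eq, sin_sq_logcos_eq, odd_integral_zero]
  ring

/-- The inner integral. -/
lemma inner_integral (x : ℝ) : ∫ y : ℝ, Hfun y * |x - y|^2 * Real.log |x - y|
    = (1 + x^2)/2 * Real.log (1 + x^2) + 1 := by
  set r : ℝ := Real.sqrt (1 + x^2) with hrdef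
  have hr0 : 0 < r := Real.sqrt_pos.mpr (by positivity)
  have hr2 : r^2 = 1 + x^2 := Real.sq_sqrt (by positivity)
  set φ : ℝ := Real.arccos (x / r) with hφdef
  have hxr : |x / r| ≤ 1 := by
    rw [abs_div, abs_of_pos hr0, div_le_one hr0]
    have : |x| = Real.sqrt (x^2) := (Real.sqrt_sq_eq_abs x).symm
    rw [this]
    exact Real.sqrt_le_sqrt (by linarith)
  have hcosφ : Real.cos φ = x / r := Real.cos_arccos (abs_le.mp hxr).1 (abs_le.mp hxr).2
  have hsinφ : Real.sin φ = 1 / r := by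
    rw [hφdef, Real.sin_arccos]
    rw [show 1 - (x/r)^2 = (1/r)^2 by field_simp; linarith [hr2]]
    exact Real.sqrt_sq (by positivity)
  have hkey : ∀ θ : ℝ, x * Real.cos θ - Real.sin θ = r * Real.cos (θ + φ) := by
    intro θ
    rw [Real.cos_add, hcosφ, hsinφ]
    field_simp
  -- substitution
  rw [integral_tan_subst (fun y => Hfun y * |x - y|^2 * Real.log |x - y|)]
  have hcongr : ∫ θ in (-(π/2):ℝ)..(π/2),
      (1 / Real.cos θ ^ 2) * (Hfun (Real.tan θ) * |x - Real.tan θ|^2 * Real.log |x - Real.tan θ|)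
      = ∫ θ in (-(π/2):ℝ)..(π/2),
        ((2/π * r^2 * Real.log r) * Real.cos (θ + φ)^2
          + (2/π * r^2) * (Real.cos (θ + φ)^2 * Real.log |Real.cos (θ + φ)|)
          - (2/π * r^2) * (Real.cos (θ + φ)^2 * Real.log (Real.cos θ))) := by
    apply interval_congr_Ioo' (by linarith [Real.pi_pos])
    intro θ hθ
    have hc : 0 < Real.cos θ := Real.cos_pos_of_mem_Ioo hθ
    have htan : Real.tan θ = Real.sin θ / Real.cos θ := Real.tan_eq_sin_div_cos θ
    have hH : Hfun (Real.tan θ) = 2/π * Real.cos θ ^ 4 := by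
      rw [Hfun, show 1 + Real.tan θ ^2 = 1 / Real.cos θ ^2 by
        rw [htan]; field_simp; try linarith [Real.sin_sq_add_cos_sq θ]]
      field_simp
    have hdiff : x - Real.tan θ = r * Real.cos (θ + φ) / Real.cos θ := by
      rw [htan]
      field_simp
      linarith [hkey θ]
    by_cases hz : Real.cos (θ + φ) = 0
    · rw [hdiff, hz]
      simp
    · have habs : |x - Real.tan θ| = r * |Real.cos (θ + φ)| / Real.cos θ := by
        rw [hdiff, abs_div, abs_mul, abs_of_pos hr0, abs_of_pos hc]
      have hlog : Real.log |x - Real.tan θ|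
          = Real.log r + Real.log |Real.cos (θ + φ)| - Real.log (Real.cos θ) := by
        rw [habs, Real.log_div (by positivity) hc.ne', Real.log_mul hr0.ne'
          (by simpa [abs_ne_zero] using hz)]
      rw [hH, hlog, habs]
      have hc4 : Real.cos θ ≠ 0 := hc.ne'
      rw [div_pow, mul_pow, sq_abs]
      field_simp
  rw [hcongr]
  have hII2 : IntervalIntegrable (fun θ : ℝ => (2/π * r^2 * Real.log r) * Real.cos (θ + φ)^2)
      volume (-(π/2)) (π/2) := by
    apply Continuous.intervalIntegrable
    exact continuous_const.mul ((Real.continuous_cos.comp (continuous_id.add continuous_const)).pow 2)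
  have hII3 : IntervalIntegrable
      (fun θ : ℝ => (2/π * r^2) * (Real.cos (θ + φ)^2 * Real.log |Real.cos (θ + φ)|))
      volume (-(π/2)) (π/2) := by
    apply Continuous.intervalIntegrable
    have h : Continuous (fun t : ℝ => Real.cos t ^ 2 * Real.log |Real.cos t|) := by
      have he : (fun t : ℝ => Real.cos t ^ 2 * Real.log |Real.cos t|)
          = fun t : ℝ => |Real.cos t| * (|Real.cos t| * Real.log |Real.cos t|) := by
        funext t; rw [← sq_abs]; ring
      rw [he]
      exact (continuous_abs.comp Real.continuous_cos).mul
        (Real.continuous_mul_log.comp (continuous_abs.comp Real.continuous_cos))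
    exact continuous_const.mul (h.comp (continuous_id.add continuous_const))
  have hII4 : IntervalIntegrable
      (fun θ : ℝ => (2/π * r^2) * (Real.cos (θ + φ)^2 * Real.log (Real.cos θ)))
      volume (-(π/2)) (π/2) := by
    apply IntervalIntegrable.const_mul
    exact II_mul_logcos _ (((Real.measurable_cos.comp (measurable_id.add_const φ)).pow_const 2))
      (fun t => abs_cos_sq_le (t + φ))
  rw [intervalIntegral.integral_sub (hII2.add hII3) hII4,
    intervalIntegral.integral_add hII2 hII3,
    intervalIntegral.integral_const_mul, intervalIntegral.integral_const_mul,
    intervalIntegral.integral_const_mul, E2, E3, E4]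
  have hlogr : Real.log r = Real.log (1 + x^2) / 2 := by
    rw [hrdef, Real.log_sqrt (by positivity)]
  have hcos2 : Real.cos φ ^ 2 = x^2 / r^2 := by rw [hcosφ]; field_simp
  have hsin2 : Real.sin φ ^ 2 = 1 / r^2 := by rw [hsinφ]; field_simp
  rw [hlogr, hcos2, hsin2, hr2]
  have hπ : π ≠ 0 := Real.pi_ne_zero
  have h1x : (1:ℝ) + x^2 ≠ 0 := by positivity
  field_simp
  ring



theorem stmt_9 :
    (∫ x : ℝ, ∫ y : ℝ, Hfun x * Hfun y * |x - y|^2 * Real.log |x - y|)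
      = 2 * Real.log 2 + 1 := by
  have hinner : ∀ x : ℝ, (∫ y : ℝ, Hfun x * Hfun y * |x - y|^2 * Real.log |x - y|)
      = Hfun x * ((1 + x^2)/2 * Real.log (1 + x^2) + 1) := by
    intro x
    have h1 : (fun y : ℝ => Hfun x * Hfun y * |x - y|^2 * Real.log |x - y|)
        = fun y : ℝ => Hfun x * (Hfun y * |x - y|^2 * Real.log |x - y|) := by
      funext y; ring
    rw [h1, MeasureTheory.integral_const_mul, inner_integral x]
  have h2 : (fun x : ℝ => ∫ y : ℝ, Hfun x * Hfun y * |x - y|^2 * Real.log |x - y|)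
      = fun x : ℝ => Hfun x * ((1 + x^2)/2 * Real.log (1 + x^2) + 1) := funext hinner
  rw [show (∫ x : ℝ, ∫ y : ℝ, Hfun x * Hfun y * |x - y|^2 * Real.log |x - y|)
      = ∫ x : ℝ, Hfun x * ((1 + x^2)/2 * Real.log (1 + x^2) + 1) by rw [h2]]
  rw [integral_tan_subst (fun x => Hfun x * ((1 + x^2)/2 * Real.log (1 + x^2) + 1))]
  have hcongr : ∫ θ in (-(π/2):ℝ)..(π/2), (1 / Real.cos θ ^ 2) *
        (Hfun (Real.tan θ) * ((1 + Real.tan θ^2)/2 * Real.log (1 + Real.tan θ^2) + 1))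
      = ∫ θ in (-(π/2):ℝ)..(π/2),
        ((2/π) * (-Real.log (Real.cos θ)) + (2/π) * Real.cos θ ^ 2) := by
    apply interval_congr_Ioo' (by linarith [Real.pi_pos])
    intro θ hθ
    have hc : 0 < Real.cos θ := Real.cos_pos_of_mem_Ioo hθ
    have htan : Real.tan θ = Real.sin θ / Real.cos θ := Real.tan_eq_sin_div_cos θ
    have hpy := Real.sin_sq_add_cos_sq θ
    have ht2 : 1 + Real.tan θ ^2 = (Real.cos θ ^2)⁻¹ := by
      rw [htan]; field_simp; try linarith
    have hH : Hfun (Real.tan θ) = 2/π * Real.cos θ ^ 4 := by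
      rw [Hfun, ht2]
      field_simp
    have hlog : Real.log (1 + Real.tan θ ^2) = -(2 * Real.log (Real.cos θ)) := by
      rw [ht2, Real.log_inv, show Real.cos θ ^2 = Real.cos θ ^ (2:ℕ) by norm_num,
        Real.log_pow]
      norm_num
    rw [hH, hlog, ht2]
    field_simp
  rw [hcongr]
  have hII1 : IntervalIntegrable (fun θ : ℝ => (2/π) * (-Real.log (Real.cos θ)))
      volume (-(π/2)) (π/2) := (II_logcos.neg).const_mul _
  have hII2 : IntervalIntegrable (fun θ : ℝ => (2/π) * Real.cos θ ^ 2)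
      volume (-(π/2)) (π/2) :=
    (continuous_const.mul (Real.continuous_cos.pow 2)).intervalIntegrable _ _
  rw [intervalIntegral.integral_add hII1 hII2, intervalIntegral.integral_const_mul,
    intervalIntegral.integral_const_mul, intervalIntegral.integral_neg, c0, integral_cos_sq]
  have hπ : π ≠ 0 := Real.pi_ne_zero
  simp [Real.cos_pi_div_two, Real.sin_pi_div_two]
  field_simp
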